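/- Let 𝔸_V=(A,V,ψ,σ) be a quadruple satisfying the twisted condition. Then: (a) (μ_A⊗V)∘(A⊗σ)∘(ψ⊗V)∘(V⊗∇_{A⊗V})=∇_{A⊗V}∘(μ_A⊗V)∘(A⊗σ)∘(ψ⊗V); (b) ∇_{A⊗V}∘(μ_A⊗V)∘(A⊗σ)∘(∇_{A⊗V}⊗V)=∇_{A⊗V}∘(μ_A⊗V)∘(A⊗σ). If moreover ∇_{A⊗V}∘σ=σ, then also (c) (μ_A⊗V)∘(A⊗σ)∘(ψ⊗V)∘(V⊗∇_{A⊗V})=(μ_A⊗V)∘(A⊗σ)∘(ψ⊗V) and (d) (μ_A⊗V)∘(A⊗σ)∘(∇_{A⊗V}⊗V)=(μ_A⊗V)∘(A⊗σ). -/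

import Mathlib

open CategoryTheory MonoidalCategory

universe v u

namespace WeakCrossed

variable {C : Type u} [Category.{v} C] [MonoidalCategory C]

/-- The monoid axioms for a triple `(A, η, μ)` in a monoidal category. -/
def IsMon (A : C) (eta : 𝟙_ C ⟶ A) (mu : A ⊗ A ⟶ A) : Prop :=
  (eta ▷ A) ≫ mu = (λ_ A).hom ∧ (A ◁ eta) ≫ mu = (ρ_ A).hom ∧
    (mu ▷ A) ≫ mu = (α_ A A A).hom ≫ (A ◁ mu) ≫ mu

/-- The morphism `(μ_A ⊗ Y) ∘ (A ⊗ f) : (A ⊗ X) ⊗ Z ⟶ A ⊗ Y` for `f : X ⊗ Z ⟶ A ⊗ Y`. -/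
def phi (A : C) {X Z Y : C} (mu : A ⊗ A ⟶ A) (f : X ⊗ Z ⟶ A ⊗ Y) :
    (A ⊗ X) ⊗ Z ⟶ A ⊗ Y :=
  (α_ A X Z).hom ≫ (A ◁ f) ≫ (α_ A A Y).inv ≫ (mu ▷ Y)

/-- The measuring condition `(μ_A ⊗ V) ∘ (A ⊗ ψ) ∘ (ψ ⊗ A) = ψ ∘ (V ⊗ μ_A)`. -/
def Measuring (A V : C) (mu : A ⊗ A ⟶ A) (psi : V ⊗ A ⟶ A ⊗ V) : Prop :=
  (psi ▷ A) ≫ phi A mu psi = (α_ V A A).hom ≫ (V ◁ mu) ≫ psi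

/-- The idempotent `∇_{A⊗V} = (μ_A ⊗ V) ∘ (A ⊗ ψ) ∘ (A ⊗ V ⊗ η_A)`. -/
def nabla (A V : C) (eta : 𝟙_ C ⟶ A) (mu : A ⊗ A ⟶ A) (psi : V ⊗ A ⟶ A ⊗ V) :
    A ⊗ V ⟶ A ⊗ V :=
  (ρ_ (A ⊗ V)).inv ≫ ((A ⊗ V) ◁ eta) ≫ phi A mu psi

/-- The twisted condition
`(μ_A ⊗ V) ∘ (A ⊗ ψ) ∘ (σ ⊗ A) = (μ_A ⊗ V) ∘ (A ⊗ σ) ∘ (ψ ⊗ V) ∘ (V ⊗ ψ)`. -/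
def Twisted (A V : C) (mu : A ⊗ A ⟶ A) (psi : V ⊗ A ⟶ A ⊗ V)
    (sig : V ⊗ V ⟶ A ⊗ V) : Prop :=
  (sig ▷ A) ≫ phi A mu psi =
    (α_ V V A).hom ≫ (V ◁ psi) ≫ (α_ V A V).inv ≫ (psi ▷ V) ≫ phi A mu sig

/-- The cocycle condition
`(μ_A ⊗ V) ∘ (A ⊗ σ) ∘ (σ ⊗ V) = (μ_A ⊗ V) ∘ (A ⊗ σ) ∘ (ψ ⊗ V) ∘ (V ⊗ σ)`. -/
def Cocycle (A V : C) (mu : A ⊗ A ⟶ A) (psi : V ⊗ A ⟶ A ⊗ V)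
    (sig : V ⊗ V ⟶ A ⊗ V) : Prop :=
  (sig ▷ V) ≫ phi A mu sig =
    (α_ V V V).hom ≫ (V ◁ sig) ≫ (α_ V A V).inv ≫ (psi ▷ V) ≫ phi A mu sig

/-- The weak crossed product multiplication
`μ_{A⊗V} = (μ_A ⊗ V) ∘ (μ_A ⊗ σ) ∘ (A ⊗ ψ ⊗ V)`. -/
def prodAV (A V : C) (mu : A ⊗ A ⟶ A) (psi : V ⊗ A ⟶ A ⊗ V)
    (sig : V ⊗ V ⟶ A ⊗ V) : (A ⊗ V) ⊗ (A ⊗ V) ⟶ A ⊗ V :=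
  (α_ A V (A ⊗ V)).hom ≫ (A ◁ ((α_ V A V).inv ≫ (psi ▷ V) ≫ (α_ A V V).hom)) ≫
    (α_ A A (V ⊗ V)).inv ≫ (mu ⊗ₘ sig) ≫ (α_ A A V).inv ≫ (mu ▷ V)

/-- The morphism `η_A ⊗ V : V ⟶ A ⊗ V`. -/
def etaT (A V : C) (eta : 𝟙_ C ⟶ A) : V ⟶ A ⊗ V := (λ_ V).inv ≫ (eta ▷ V)

/-- The morphism `β_ν = (μ_A ⊗ V) ∘ (A ⊗ ν) : A ⟶ A ⊗ V`. -/
def beta (A V : C) (mu : A ⊗ A ⟶ A) (nu : 𝟙_ C ⟶ A ⊗ V) : A ⟶ A ⊗ V :=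
  (ρ_ A).inv ≫ (A ◁ nu) ≫ (α_ A A V).inv ≫ (mu ▷ V)

/-- Preunit condition (pre1):
`(μ_A ⊗ V) ∘ (A ⊗ σ) ∘ (ψ ⊗ V) ∘ (V ⊗ ν) = ∇_{A⊗V} ∘ (η_A ⊗ V)`. -/
def Pre1 (A V : C) (eta : 𝟙_ C ⟶ A) (mu : A ⊗ A ⟶ A) (psi : V ⊗ A ⟶ A ⊗ V)
    (sig : V ⊗ V ⟶ A ⊗ V) (nu : 𝟙_ C ⟶ A ⊗ V) : Prop :=
  (ρ_ V).inv ≫ (V ◁ nu) ≫ (α_ V A V).inv ≫ (psi ▷ V) ≫ phi A mu sig =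
    etaT A V eta ≫ nabla A V eta mu psi

/-- Preunit condition (pre2):
`(μ_A ⊗ V) ∘ (A ⊗ σ) ∘ (ν ⊗ V) = ∇_{A⊗V} ∘ (η_A ⊗ V)`. -/
def Pre2 (A V : C) (eta : 𝟙_ C ⟶ A) (mu : A ⊗ A ⟶ A) (psi : V ⊗ A ⟶ A ⊗ V)
    (sig : V ⊗ V ⟶ A ⊗ V) (nu : 𝟙_ C ⟶ A ⊗ V) : Prop :=
  (λ_ V).inv ≫ (nu ▷ V) ≫ phi A mu sig = etaT A V eta ≫ nabla A V eta mu psi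

/-- Preunit condition (pre3): `(μ_A ⊗ V) ∘ (A ⊗ ψ) ∘ (ν ⊗ A) = β_ν`. -/
def Pre3 (A V : C) (mu : A ⊗ A ⟶ A) (psi : V ⊗ A ⟶ A ⊗ V)
    (nu : 𝟙_ C ⟶ A ⊗ V) : Prop :=
  (λ_ A).inv ≫ (nu ▷ A) ≫ phi A mu psi = beta A V mu nu

/-- `(A ⊗ V, μ_{A⊗V})` is a weak crossed product: measuring, twisted and cocycle
conditions hold and `∇_{A⊗V} ∘ σ = σ`. -/
def WCP (A V : C) (eta : 𝟙_ C ⟶ A) (mu : A ⊗ A ⟶ A) (psi : V ⊗ A ⟶ A ⊗ V)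
    (sig : V ⊗ V ⟶ A ⊗ V) : Prop :=
  Measuring A V mu psi ∧ Twisted A V mu psi sig ∧ Cocycle A V mu psi sig ∧
    sig ≫ nabla A V eta mu psi = sig

/-- `(A ⊗ V, μ_{A⊗V})` is a weak crossed product with preunit `ν`. -/
def WCPpre (A V : C) (eta : 𝟙_ C ⟶ A) (mu : A ⊗ A ⟶ A) (psi : V ⊗ A ⟶ A ⊗ V)
    (sig : V ⊗ V ⟶ A ⊗ V) (nu : 𝟙_ C ⟶ A ⊗ V) : Prop :=
  WCP A V eta mu psi sig ∧ Pre1 A V eta mu psi sig nu ∧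
    Pre2 A V eta mu psi sig nu ∧ Pre3 A V mu psi nu

/-- `(μ_A ⊗ Y) ∘ (A ⊗ γ) : A ⊗ X ⟶ A ⊗ Y` for `γ : X ⟶ A ⊗ Y`. -/
def tmap (A : C) {X Y : C} (mu : A ⊗ A ⟶ A) (g : X ⟶ A ⊗ Y) : A ⊗ X ⟶ A ⊗ Y :=
  (A ◁ g) ≫ (α_ A A Y).inv ≫ (mu ▷ Y)

/-- Left `A`-linearity of `T : A ⊗ X ⟶ A ⊗ Y`:
`T ∘ (μ_A ⊗ X) = (μ_A ⊗ Y) ∘ (A ⊗ T)`. -/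
def LeftLin (A : C) {X Y : C} (mu : A ⊗ A ⟶ A) (T : A ⊗ X ⟶ A ⊗ Y) : Prop :=
  (mu ▷ X) ≫ T = (α_ A A X).hom ≫ (A ◁ T) ≫ (α_ A A Y).inv ≫ (mu ▷ Y)

/-- `ν` is a preunit for the associative product `m` on `X`. -/
def IsPreunit {X : C} (m : X ⊗ X ⟶ X) (nu : 𝟙_ C ⟶ X) : Prop :=
  (ρ_ X).inv ≫ (X ◁ nu) ≫ m = (λ_ X).inv ≫ (nu ▷ X) ≫ m ∧
  (ρ_ X).inv ≫ (X ◁ nu) ≫ m =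
    (ρ_ X).inv ≫ (X ◁ ((λ_ (𝟙_ C)).inv ≫ (nu ⊗ₘ nu) ≫ m)) ≫ m

/-- Brzeziński normalization conditions: `ψ ∘ (η_V ⊗ A) = A ⊗ η_V`,
`ψ ∘ (V ⊗ η_A) = η_A ⊗ V`, `σ ∘ (η_V ⊗ V) = σ ∘ (V ⊗ η_V) = η_A ⊗ V`. -/
def BrzNorm (A V : C) (eta : 𝟙_ C ⟶ A) (etaV : 𝟙_ C ⟶ V) (psi : V ⊗ A ⟶ A ⊗ V)
    (sig : V ⊗ V ⟶ A ⊗ V) : Prop :=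
  (λ_ A).inv ≫ (etaV ▷ A) ≫ psi = (ρ_ A).inv ≫ (A ◁ etaV) ∧
  (ρ_ V).inv ≫ (V ◁ eta) ≫ psi = (λ_ V).inv ≫ (eta ▷ V) ∧
  (λ_ V).inv ≫ (etaV ▷ V) ≫ sig = (λ_ V).inv ≫ (eta ▷ V) ∧
  (ρ_ V).inv ≫ (V ◁ etaV) ≫ sig = (λ_ V).inv ≫ (eta ▷ V)

def g0 (A V : C) (eta : 𝟙_ C ⟶ A) (psi : V ⊗ A ⟶ A ⊗ V) : V ⟶ A ⊗ V :=
  (ρ_ V).inv ≫ (V ◁ eta) ≫ psi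

lemma phi_eq (A : C) {X Z Y : C} (mu : A ⊗ A ⟶ A) (f : X ⊗ Z ⟶ A ⊗ Y) :
    phi A mu f = (α_ A X Z).hom ≫ tmap A mu f := rfl

lemma nabla_eq (A V : C) (eta : 𝟙_ C ⟶ A) (mu : A ⊗ A ⟶ A) (psi : V ⊗ A ⟶ A ⊗ V) :
    nabla A V eta mu psi = tmap A mu (g0 A V eta psi) := by
  simp only [nabla, phi, tmap, g0]; monoidal

lemma tmap_comp {A : C} {eta : 𝟙_ C ⟶ A} {mu : A ⊗ A ⟶ A} (hA : IsMon A eta mu)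
    {X Y Z : C} (g : X ⟶ A ⊗ Y) (h : Y ⟶ A ⊗ Z) :
    tmap A mu g ≫ tmap A mu h = tmap A mu (g ≫ tmap A mu h) := by
  simp only [tmap]
  slice_lhs 3 4 => rw [← whisker_exchange]
  trans (A ◁ g) ≫ (α_ A A Y).inv ≫ ((A ⊗ A) ◁ h) ≫ (α_ (A ⊗ A) A Z).inv ≫
      (((mu ▷ A) ≫ mu) ▷ Z)
  · monoidal
  rw [hA.2.2]
  monoidal

lemma tmap_whisker {A : C} {eta : 𝟙_ C ⟶ A} {mu : A ⊗ A ⟶ A} (hA : IsMon A eta mu)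
    {X Y Z W : C} (k : X ⟶ A ⊗ Y) (h : Y ⊗ Z ⟶ A ⊗ W) :
    (tmap A mu k ▷ Z) ≫ (α_ A Y Z).hom ≫ tmap A mu h =
      (α_ A X Z).hom ≫ tmap A mu ((k ▷ Z) ≫ (α_ A Y Z).hom ≫ tmap A mu h) := by
  simp only [tmap]
  trans ((A ◁ k) ▷ Z) ≫ (α_ A (A ⊗ Y) Z).hom ≫ (A ◁ (α_ A Y Z).hom) ≫
      (α_ A A (Y ⊗ Z)).inv ≫ (mu ▷ (Y ⊗ Z)) ≫ (A ◁ h) ≫ (α_ A A W).inv ≫ (mu ▷ W)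
  · monoidal
  slice_lhs 5 6 => rw [← whisker_exchange]
  trans ((A ◁ k) ▷ Z) ≫ (α_ A (A ⊗ Y) Z).hom ≫ (A ◁ (α_ A Y Z).hom) ≫
      (α_ A A (Y ⊗ Z)).inv ≫ ((A ⊗ A) ◁ h) ≫ (α_ (A ⊗ A) A W).inv ≫
      (((mu ▷ A) ≫ mu) ▷ W)
  · monoidal
  rw [hA.2.2]
  monoidal

lemma etaT_tmap {A : C} {eta : 𝟙_ C ⟶ A} {mu : A ⊗ A ⟶ A} (hA : IsMon A eta mu)
    {X Y : C} (k : X ⟶ A ⊗ Y) :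
    etaT A X eta ≫ tmap A mu k = k := by
  simp only [etaT, tmap]
  slice_lhs 2 3 => rw [← whisker_exchange]
  trans k ≫ (λ_ (A ⊗ Y)).inv ≫ (α_ (𝟙_ C) A Y).inv ≫ (((eta ▷ A) ≫ mu) ▷ Y)
  · monoidal
  rw [hA.1]
  monoidal

lemma star' {A V : C} {eta : 𝟙_ C ⟶ A} {mu : A ⊗ A ⟶ A} {psi : V ⊗ A ⟶ A ⊗ V}
    {sig : V ⊗ V ⟶ A ⊗ V} (htw : Twisted A V mu psi sig) :
    (V ◁ g0 A V eta psi) ≫ (α_ V A V).inv ≫ (psi ▷ V) ≫ (α_ A V V).hom ≫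
      tmap A mu sig = sig ≫ tmap A mu (g0 A V eta psi) := by
  have ht : (sig ▷ A) ≫ phi A mu psi =
      (α_ V V A).hom ≫ (V ◁ psi) ≫ (α_ V A V).inv ≫ (psi ▷ V) ≫ phi A mu sig := htw
  calc (V ◁ g0 A V eta psi) ≫ (α_ V A V).inv ≫ (psi ▷ V) ≫ (α_ A V V).hom ≫
        tmap A mu sig
      = ((ρ_ (V ⊗ V)).inv ≫ ((V ⊗ V) ◁ eta)) ≫ (α_ V V A).hom ≫ (V ◁ psi) ≫
          (α_ V A V).inv ≫ (psi ▷ V) ≫ phi A mu sig := by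
        simp only [g0, phi, tmap]; monoidal
    _ = (ρ_ (V ⊗ V)).inv ≫ ((V ⊗ V) ◁ eta) ≫ (sig ▷ A) ≫ phi A mu psi := by
        rw [← ht]; simp only [Category.assoc]
    _ = sig ≫ tmap A mu (g0 A V eta psi) := by
        slice_lhs 2 3 => rw [whisker_exchange]
        simp only [phi, tmap, g0]; monoidal

lemma keyA' {A V : C} {eta : 𝟙_ C ⟶ A} {mu : A ⊗ A ⟶ A} {psi : V ⊗ A ⟶ A ⊗ V}
    {sig : V ⊗ V ⟶ A ⊗ V} (hA : IsMon A eta mu) (hpsi : Measuring A V mu psi)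
    (htw : Twisted A V mu psi sig) :
    (V ◁ tmap A mu (g0 A V eta psi)) ≫ (α_ V A V).inv ≫ (psi ▷ V) ≫
        (α_ A V V).hom ≫ tmap A mu sig =
      (α_ V A V).inv ≫ (psi ▷ V) ≫ (α_ A V V).hom ≫
        tmap A mu (sig ≫ tmap A mu (g0 A V eta psi)) := by
  have hm : (psi ▷ A) ≫ phi A mu psi = (α_ V A A).hom ≫ (V ◁ mu) ≫ psi := hpsi
  calc (V ◁ tmap A mu (g0 A V eta psi)) ≫ (α_ V A V).inv ≫ (psi ▷ V) ≫
        (α_ A V V).hom ≫ tmap A mu sig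
      = (V ◁ (A ◁ g0 A V eta psi)) ≫ (V ◁ (α_ A A V).inv) ≫ (α_ V (A ⊗ A) V).inv ≫
          ((α_ V A A).inv ▷ V) ≫ (((α_ V A A).hom ≫ (V ◁ mu) ≫ psi) ▷ V) ≫
          (α_ A V V).hom ≫ tmap A mu sig := by
        simp only [tmap]; monoidal
    _ = (V ◁ (A ◁ g0 A V eta psi)) ≫ (V ◁ (α_ A A V).inv) ≫ (α_ V (A ⊗ A) V).inv ≫
          ((α_ V A A).inv ▷ V) ≫ (((psi ▷ A) ≫ phi A mu psi) ▷ V) ≫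
          (α_ A V V).hom ≫ tmap A mu sig := by
        rw [← hm]
    _ = (V ◁ (A ◁ g0 A V eta psi)) ≫ (V ◁ (α_ A A V).inv) ≫ (α_ V (A ⊗ A) V).inv ≫
          ((α_ V A A).inv ▷ V) ≫ ((psi ▷ A) ▷ V) ≫ ((α_ A V A).hom ▷ V) ≫
          (tmap A mu psi ▷ V) ≫ (α_ A V V).hom ≫ tmap A mu sig := by
        simp only [phi, tmap]; monoidal
    _ = (V ◁ (A ◁ g0 A V eta psi)) ≫ (V ◁ (α_ A A V).inv) ≫ (α_ V (A ⊗ A) V).inv ≫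
          ((α_ V A A).inv ▷ V) ≫ ((psi ▷ A) ▷ V) ≫ ((α_ A V A).hom ▷ V) ≫
          (α_ A (V ⊗ A) V).hom ≫
          tmap A mu ((psi ▷ V) ≫ (α_ A V V).hom ≫ tmap A mu sig) := by
        rw [tmap_whisker hA psi sig]
    _ = (α_ V A V).inv ≫ (((V ⊗ A) ◁ g0 A V eta psi) ≫ (psi ▷ (A ⊗ V))) ≫
          (α_ A V (A ⊗ V)).hom ≫ (A ◁ (α_ V A V).inv) ≫
          tmap A mu ((psi ▷ V) ≫ (α_ A V V).hom ≫ tmap A mu sig) := by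
        simp only [tmap]; monoidal
    _ = (α_ V A V).inv ≫ ((psi ▷ V) ≫ ((A ⊗ V) ◁ g0 A V eta psi)) ≫
          (α_ A V (A ⊗ V)).hom ≫ (A ◁ (α_ V A V).inv) ≫
          tmap A mu ((psi ▷ V) ≫ (α_ A V V).hom ≫ tmap A mu sig) := by
        rw [whisker_exchange]
    _ = (α_ V A V).inv ≫ (psi ▷ V) ≫ (α_ A V V).hom ≫
          tmap A mu ((V ◁ g0 A V eta psi) ≫ (α_ V A V).inv ≫ (psi ▷ V) ≫
            (α_ A V V).hom ≫ tmap A mu sig) := by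
        simp only [tmap]; monoidal
    _ = (α_ V A V).inv ≫ (psi ▷ V) ≫ (α_ A V V).hom ≫
          tmap A mu (sig ≫ tmap A mu (g0 A V eta psi)) := by
        rw [star' htw]

lemma bpp' {A V : C} {eta : 𝟙_ C ⟶ A} {mu : A ⊗ A ⟶ A} {psi : V ⊗ A ⟶ A ⊗ V}
    {sig : V ⊗ V ⟶ A ⊗ V} (hA : IsMon A eta mu) (hpsi : Measuring A V mu psi)
    (htw : Twisted A V mu psi sig) :
    (g0 A V eta psi ▷ V) ≫ (α_ A V V).hom ≫
        tmap A mu (sig ≫ tmap A mu (g0 A V eta psi)) =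
      sig ≫ tmap A mu (g0 A V eta psi) := by
  calc (g0 A V eta psi ▷ V) ≫ (α_ A V V).hom ≫
        tmap A mu (sig ≫ tmap A mu (g0 A V eta psi))
      = (V ◁ etaT A V eta) ≫ (α_ V A V).inv ≫ (psi ▷ V) ≫ (α_ A V V).hom ≫
          tmap A mu (sig ≫ tmap A mu (g0 A V eta psi)) := by
        simp only [g0, etaT, tmap]; monoidal
    _ = (V ◁ etaT A V eta) ≫ (V ◁ tmap A mu (g0 A V eta psi)) ≫ (α_ V A V).inv ≫
          (psi ▷ V) ≫ (α_ A V V).hom ≫ tmap A mu sig := by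
        rw [← keyA' hA hpsi htw]
    _ = (V ◁ g0 A V eta psi) ≫ (α_ V A V).inv ≫ (psi ▷ V) ≫ (α_ A V V).hom ≫
          tmap A mu sig := by
        slice_lhs 1 2 => rw [← MonoidalCategory.whiskerLeft_comp, etaT_tmap hA]
        simp only [Category.assoc]
    _ = sig ≫ tmap A mu (g0 A V eta psi) := star' htw


/-- consequences of the twisted condition. -/
theorem twisted_consequences (A V : C) (eta : 𝟙_ C ⟶ A) (mu : A ⊗ A ⟶ A)
    (hA : IsMon A eta mu) (psi : V ⊗ A ⟶ A ⊗ V) (hpsi : Measuring A V mu psi)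
    (sig : V ⊗ V ⟶ A ⊗ V) (htw : Twisted A V mu psi sig) :
    ((V ◁ nabla A V eta mu psi) ≫ (α_ V A V).inv ≫ (psi ▷ V) ≫ phi A mu sig =
        (α_ V A V).inv ≫ (psi ▷ V) ≫ phi A mu sig ≫ nabla A V eta mu psi) ∧
    ((nabla A V eta mu psi ▷ V) ≫ phi A mu sig ≫ nabla A V eta mu psi =
        phi A mu sig ≫ nabla A V eta mu psi) ∧
    (sig ≫ nabla A V eta mu psi = sig →
      ((V ◁ nabla A V eta mu psi) ≫ (α_ V A V).inv ≫ (psi ▷ V) ≫ phi A mu sig =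
          (α_ V A V).inv ≫ (psi ▷ V) ≫ phi A mu sig) ∧
      ((nabla A V eta mu psi ▷ V) ≫ phi A mu sig = phi A mu sig)) := by
  refine ⟨?_, ?_, fun hs => ?_⟩
  · rw [phi_eq A mu sig, nabla_eq A V eta mu psi]
    try simp only [Category.assoc]
    rw [tmap_comp hA sig (g0 A V eta psi)]
    exact keyA' hA hpsi htw
  · rw [phi_eq A mu sig, nabla_eq A V eta mu psi]
    try simp only [Category.assoc]
    rw [tmap_comp hA sig (g0 A V eta psi), tmap_whisker hA (g0 A V eta psi),
      bpp' hA hpsi htw]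
  · have hs' : sig ≫ tmap A mu (g0 A V eta psi) = sig := by
      rw [← nabla_eq]; exact hs
    constructor
    · rw [phi_eq A mu sig, nabla_eq A V eta mu psi]
      try simp only [Category.assoc]
      rw [keyA' hA hpsi htw, hs']
    · rw [phi_eq A mu sig, nabla_eq A V eta mu psi]
      try simp only [Category.assoc]
      conv_lhs => rw [← hs']
      rw [tmap_whisker hA (g0 A V eta psi), bpp' hA hpsi htw, hs']

end WeakCrossed
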